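/- Let (y_k)_{k=1}^N be continuous functions [0,T] → ℝ² and for n ∈ ℕ* define z_n : [0,T] → ℝ² piecewise by z_n(t) = y_k(t) when t lies in the k-th of N equal subintervals of the i-th of n equal subintervals of [0,T]. Then for every continuous bounded φ : [0,T] × ℝ² → ℝ that is Lipschitz in both variables, ∫₀^T φ(t, z_n(t)) dt → (1/N) Σ_{k=1}^N ∫₀^T φ(t, y_k(t)) dt as n → ∞. -/

import Mathlib

noncomputable section

abbrev E2 := EuclideanSpace ℝ (Fin 2)

/-- The oscillating control: on the `k`-th of the `N` equal subintervals of each of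
the `n` equal subintervals of `[0,T]`, it follows `y k`. -/
def zosc (N : ℕ) (hN : 0 < N) (T : ℝ) (y : Fin N → ℝ → E2) (n : ℕ) (t : ℝ) : E2 :=
  y ⟨(⌊t * (n * N : ℕ) / T⌋).toNat % N, Nat.mod_lt _ hN⟩ t

private lemma sum_range_mul_split (F : ℕ → ℝ) (n N : ℕ) :
    ∑ j ∈ Finset.range (n * N), F j
      = ∑ i ∈ Finset.range n, ∑ k ∈ Finset.range N, F (i * N + k) := by
  induction n with
  | zero => simp
  | succ n ih =>
    rw [Finset.sum_range_succ, ← ih, Nat.succ_mul, Finset.sum_range_add]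

set_option maxHeartbeats 1000000 in
open Filter in
theorem stmt_19 (N : ℕ) (hN : 0 < N) (T : ℝ) (hT : 0 < T)
    (y : Fin N → ℝ → E2) (hy : ∀ k, Continuous (y k))
    (φ : ℝ → E2 → ℝ)
    (hbdd : ∃ C : ℝ, ∀ t p, |φ t p| ≤ C)
    (hLip : ∃ Lφ : ℝ, ∀ t t' : ℝ, ∀ p p' : E2,
      |φ t p - φ t' p'| ≤ Lφ * (|t - t'| + ‖p - p'‖)) :
    Tendsto (fun n : ℕ => ∫ t in (0 : ℝ)..T, φ t (zosc N hN T y n t)) atTop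
      (nhds ((1 / (N : ℝ)) * ∑ k : Fin N, ∫ t in (0 : ℝ)..T, φ t (y k t))) := by
  classical
  obtain ⟨Lφ, hLφ⟩ := hLip
  have hNpos : (0 : ℝ) < N := by exact_mod_cast hN
  -- nonnegativity of the Lipschitz constant
  have hL0 : 0 ≤ Lφ := by
    have h := hLφ 0 1 0 0
    have h2 : |(0:ℝ) - 1| + ‖(0:E2) - 0‖ = 1 := by simp
    rw [h2, mul_one] at h
    exact le_trans (abs_nonneg _) h
  -- continuity of φ (uncurried)
  have hφc : Continuous fun q : ℝ × E2 => φ q.1 q.2 := by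
    have : LipschitzWith (Real.toNNReal (2 * Lφ)) fun q : ℝ × E2 => φ q.1 q.2 := by
      apply LipschitzWith.of_dist_le_mul
      intro q q'
      have h1 := hLφ q.1 q'.1 q.2 q'.2
      have h2 : |q.1 - q'.1| ≤ dist q q' := by
        rw [Prod.dist_eq, Real.dist_eq]
        exact le_max_left _ _
      have h3 : ‖q.2 - q'.2‖ ≤ dist q q' := by
        rw [Prod.dist_eq, dist_eq_norm]
        exact le_max_right _ _
      have h4 : (Real.toNNReal (2 * Lφ) : ℝ) = 2 * Lφ :=
        Real.coe_toNNReal _ (by linarith)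
      rw [Real.dist_eq, h4]
      nlinarith [dist_nonneg (x := q) (y := q'), abs_nonneg (q.1 - q'.1)]
    exact this.continuous
  set f : Fin N → ℝ → ℝ := fun k t => φ t (y k t) with hfdef
  have hfc : ∀ k, Continuous (f k) :=
    fun k => hφc.comp (continuous_id.prodMk (hy k))
  have hfint : ∀ k : Fin N, ∀ A B : ℝ, IntervalIntegrable (f k) MeasureTheory.volume A B :=
    fun k A B => (hfc k).intervalIntegrable A B
  -- uniform-in-k modulus of continuity on [0, T]
  have key : ∀ ε : ℝ, 0 < ε → ∃ δ : ℝ, 0 < δ ∧ ∀ k : Fin N,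
      ∀ t ∈ Set.Icc (0:ℝ) T, ∀ s ∈ Set.Icc (0:ℝ) T, |t - s| ≤ δ → |f k t - f k s| ≤ ε := by
    intro ε hε
    have huc : ∀ k : Fin N, ∃ δ : ℝ, 0 < δ ∧
        ∀ t ∈ Set.Icc (0:ℝ) T, ∀ s ∈ Set.Icc (0:ℝ) T, |t - s| ≤ δ → |f k t - f k s| ≤ ε := by
      intro k
      have hc := (isCompact_Icc (a := (0:ℝ)) (b := T)).uniformContinuousOn_of_continuous
        (hfc k).continuousOn
      rw [Metric.uniformContinuousOn_iff_le] at hc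
      obtain ⟨δ, hδ, H⟩ := hc ε hε
      refine ⟨δ, hδ, fun t ht s hs hts => ?_⟩
      have := H t ht s hs (by rwa [Real.dist_eq])
      rwa [Real.dist_eq] at this
    choose δk hδk1 hδk2 using huc
    obtain ⟨k₀, -, hk₀⟩ := Finset.exists_min_image Finset.univ δk ⟨⟨0, hN⟩, Finset.mem_univ _⟩
    exact ⟨δk k₀, hδk1 k₀, fun k t ht s hs h =>
      hδk2 k t ht s hs (h.trans (hk₀ k (Finset.mem_univ k)))⟩
  rw [Metric.tendsto_atTop]
  intro ε' hε'
  set ε : ℝ := ε' / (2 * T + 1) with hεdef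
  have hε : 0 < ε := by positivity
  obtain ⟨δ, hδ, hmod⟩ := key ε hε
  obtain ⟨n₀, hn₀⟩ := exists_nat_ge (T / δ)
  refine ⟨max n₀ 1, fun n hn => ?_⟩
  have hn1 : 1 ≤ n := le_trans (le_max_right _ _) hn
  have hnpos : (0 : ℝ) < n := by exact_mod_cast hn1
  have hnn0 : (n₀ : ℝ) ≤ n := by exact_mod_cast le_trans (le_max_left _ _) hn
  have hTn : T / n ≤ δ := by
    rw [div_le_iff₀ hnpos]
    rw [div_le_iff₀ hδ] at hn₀
    nlinarith
  -- set-up of the subdivision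
  set u : ℝ := T / (n * N) with hu
  have hu0 : 0 < u := by
    rw [hu]; positivity
  set a : ℕ → ℝ := fun j => j * u with ha
  have hamono : ∀ j : ℕ, a j ≤ a (j + 1) := by
    intro j
    simp only [ha]
    push_cast
    nlinarith
  set fin : ℕ → Fin N := fun j => ⟨j % N, Nat.mod_lt _ hN⟩ with hfin
  -- the oscillating integrand coincides with f (fin j) inside the j-th small interval
  have hpw : ∀ j : ℕ, ∀ t ∈ Set.Ioo (a j) (a (j+1)),
      φ t (zosc N hN T y n t) = f (fin j) t := by
    intro j t ht
    have hP : (0 : ℝ) < (n : ℝ) * N := by positivity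
    have hfl : ⌊t * ((n * N : ℕ) : ℝ) / T⌋ = (j : ℤ) := by
      have h1 : (j : ℝ) * (T / ((n:ℝ) * N)) < t := by rw [← hu]; exact ht.1
      have h2 : t < ((j : ℝ) + 1) * (T / ((n:ℝ) * N)) := by
        rw [← hu]
        have h3 := ht.2
        simp only [ha] at h3
        push_cast at h3
        linarith
      have hTP : T / ((n:ℝ) * N) * ((n:ℝ) * N) = T := by field_simp
      have h1' : (j : ℝ) * T < t * ((n:ℝ) * N) := by
        have := mul_lt_mul_of_pos_right h1 hP
        rwa [mul_assoc, hTP] at this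
      have h2' : t * ((n:ℝ) * N) < ((j : ℝ) + 1) * T := by
        have := mul_lt_mul_of_pos_right h2 hP
        rwa [mul_assoc, hTP] at this
      rw [Int.floor_eq_iff]
      push_cast
      constructor
      · rw [le_div_iff₀ hT]; linarith
      · rw [div_lt_iff₀ hT]; linarith
    show φ t (y ⟨(⌊t * ((n * N : ℕ) : ℝ) / T⌋).toNat % N, Nat.mod_lt _ hN⟩ t) = f (fin j) t
    rw [hfl]
    simp [hfin, hfdef]
  have hae : ∀ j : ℕ, ∀ᵐ t : ℝ, t ∈ Set.uIoc (a j) (a (j+1)) →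
      φ t (zosc N hN T y n t) = f (fin j) t := by
    intro j
    have h0 : ∀ᵐ t : ℝ, t ≠ a (j+1) := by
      rw [MeasureTheory.ae_iff]
      simp only [not_not]
      have : {t : ℝ | t = a (j+1)} = {a (j+1)} := by ext; simp
      rw [this]
      exact MeasureTheory.measure_singleton _
    filter_upwards [h0] with t ht hmem
    rw [Set.uIoc_of_le (hamono j)] at hmem
    exact hpw j t ⟨hmem.1, lt_of_le_of_ne hmem.2 ht⟩
  have hgint : ∀ j : ℕ, IntervalIntegrable (fun t => φ t (zosc N hN T y n t))
      MeasureTheory.volume (a j) (a (j+1)) := by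
    intro j
    have h1 : (fun t => φ t (zosc N hN T y n t))
        =ᵐ[MeasureTheory.volume.restrict (Set.uIoc (a j) (a (j+1)))] f (fin j) :=
      (MeasureTheory.ae_restrict_iff' measurableSet_uIoc).mpr (hae j)
    exact (hfint (fin j) (a j) (a (j+1))).congr_ae h1.symm
  -- decompose the LHS integral
  have ha0 : a 0 = 0 := by simp [ha]
  have haT : a (n * N) = T := by
    simp only [ha, hu]
    push_cast
    field_simp
  have hLHS : ∫ t in (0:ℝ)..T, φ t (zosc N hN T y n t)
      = ∑ j ∈ Finset.range (n * N), ∫ t in a j..a (j+1), f (fin j) t := by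
    have hsum := intervalIntegral.sum_integral_adjacent_intervals
      (μ := MeasureTheory.volume) (a := a) (n := n * N)
      (f := fun t => φ t (zosc N hN T y n t)) (fun j _ => hgint j)
    rw [ha0, haT] at hsum
    rw [← hsum]
    exact Finset.sum_congr rfl fun j _ => intervalIntegral.integral_congr_ae (hae j)
  -- decompose the RHS integrals over the n big intervals
  set b : ℕ → ℝ := fun i => i * ((N : ℝ) * u) with hb
  have hb0 : b 0 = 0 := by simp [hb]
  have hbT : b n = T := by
    simp only [hb, hu]
    field_simp
  have hbmono : ∀ i : ℕ, b i ≤ b (i + 1) := by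
    intro i
    simp only [hb]
    push_cast
    nlinarith
  have hRHS : ∀ k : Fin N, ∫ t in (0:ℝ)..T, f k t
      = ∑ i ∈ Finset.range n, ∫ t in b i..b (i+1), f k t := by
    intro k
    have hsum := intervalIntegral.sum_integral_adjacent_intervals
      (μ := MeasureTheory.volume) (a := b) (n := n) (f := f k) (fun i _ => hfint k _ _)
    rw [hb0, hbT] at hsum
    rw [← hsum]
  -- express the limit as a double sum
  have hLimit : (1 / (N : ℝ)) * ∑ k : Fin N, ∫ t in (0:ℝ)..T, φ t (y k t)
      = ∑ i ∈ Finset.range n, ∑ k ∈ Finset.range N,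
          (1 / (N : ℝ)) * ∫ t in b i..b (i+1), f (fin k) t := by
    have h1 : ∑ k : Fin N, ∫ t in (0:ℝ)..T, φ t (y k t)
        = ∑ k ∈ Finset.range N, ∫ t in (0:ℝ)..T, f (fin k) t := by
      rw [← Fin.sum_univ_eq_sum_range (fun j => ∫ t in (0:ℝ)..T, f (fin j) t) N]
      refine Finset.sum_congr rfl fun k _ => ?_
      have : fin (k : ℕ) = k := by
        ext; simp [hfin, Nat.mod_eq_of_lt k.isLt]
      rw [this]
    rw [h1, Finset.mul_sum]
    rw [Finset.sum_congr rfl fun k _ => congrArg _ (hRHS (fin k))]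
    rw [Finset.sum_congr rfl fun k _ => Finset.mul_sum _ _ _]
    exact Finset.sum_comm
  -- reindex the LHS double sum
  have hLHS2 : ∫ t in (0:ℝ)..T, φ t (zosc N hN T y n t)
      = ∑ i ∈ Finset.range n, ∑ k ∈ Finset.range N,
          ∫ t in a (i * N + k)..a (i * N + k + 1), f (fin k) t := by
    rw [hLHS, sum_range_mul_split]
    refine Finset.sum_congr rfl fun i _ => Finset.sum_congr rfl fun k hk => ?_
    have hk' : k < N := Finset.mem_range.mp hk
    have : fin (i * N + k) = fin k := by
      ext
      show (i * N + k) % N = k % N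
      rw [Nat.add_comm, Nat.add_mul_mod_self_right]
    rw [this]
  -- the per-term estimate
  have hterm : ∀ i ∈ Finset.range n, ∀ k ∈ Finset.range N,
      |(∫ t in a (i * N + k)..a (i * N + k + 1), f (fin k) t)
        - (1 / (N : ℝ)) * ∫ t in b i..b (i+1), f (fin k) t| ≤ 2 * ε * u := by
    intro i hi k hk
    have hi' : i < n := Finset.mem_range.mp hi
    have hk' : k < N := Finset.mem_range.mp hk
    have hik : (i : ℝ) + 1 ≤ n := by exact_mod_cast hi'
    have hkk : (k : ℝ) + 1 ≤ N := by exact_mod_cast hk'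
    set A : ℝ := a (i * N + k) with hA
    set B : ℝ := a (i * N + k + 1) with hB
    have hAv : A = ((i : ℝ) * N + k) * u := by
      rw [hA]; simp only [ha]; push_cast; ring
    have hBv : B = ((i : ℝ) * N + k + 1) * u := by
      rw [hB]; simp only [ha]; push_cast; ring
    have hbiv : b i = (i : ℝ) * ((N : ℝ) * u) := by simp only [hb]
    have hbi1v : b (i+1) = ((i : ℝ) + 1) * ((N : ℝ) * u) := by
      simp only [hb]; push_cast; ring
    have hBA : B - A = u := by rw [hAv, hBv]; ring
    have hbb : b (i+1) - b i = (N : ℝ) * u := by rw [hbiv, hbi1v]; ring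
    have hbiA : b i ≤ A := by rw [hbiv, hAv]; nlinarith [Nat.cast_nonneg (α := ℝ) k]
    have hBbi1 : B ≤ b (i+1) := by rw [hbi1v, hBv]; nlinarith
    have hbi0 : 0 ≤ b i := by rw [hbiv]; positivity
    have hbi1T : b (i+1) ≤ T := by
      rw [hbi1v, hu]
      rw [div_le_iff₀ hnpos] at hTn
      have : ((i:ℝ)+1) * ((N:ℝ) * (T / ((n:ℝ)*N))) ≤ (n:ℝ) * ((N:ℝ) * (T / ((n:ℝ)*N))) := by
        have h2 : 0 ≤ (N:ℝ) * (T / ((n:ℝ)*N)) := by positivity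
        nlinarith
      calc ((i:ℝ)+1) * ((N:ℝ) * (T / ((n:ℝ)*N))) ≤ (n:ℝ) * ((N:ℝ) * (T / ((n:ℝ)*N))) := this
        _ = T := by field_simp
    have hNuTn : (N : ℝ) * u = T / n := by
      rw [hu]; field_simp
    set c : ℝ := f (fin k) (b i) with hc
    have hbimem : b i ∈ Set.Icc (0:ℝ) T := ⟨hbi0, le_trans (hbmono i) hbi1T⟩
    -- pointwise bounds
    have hsb : ∀ t ∈ Set.uIoc A B, ‖f (fin k) t - c‖ ≤ ε := by
      intro t htm
      rw [Set.uIoc_of_le (by linarith)] at htm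
      have ht1 : b i ≤ t := le_trans hbiA (le_of_lt htm.1)
      have ht2 : t ≤ b (i+1) := le_trans htm.2 hBbi1
      have : |t - b i| ≤ δ := by
        rw [abs_of_nonneg (by linarith)]
        calc t - b i ≤ b (i+1) - b i := by linarith
          _ = T / n := by rw [hbb, hNuTn]
          _ ≤ δ := hTn
      exact hmod (fin k) t ⟨by linarith, by linarith⟩ (b i) hbimem this
    have hbig : ∀ t ∈ Set.uIoc (b i) (b (i+1)), ‖f (fin k) t - c‖ ≤ ε := by
      intro t htm
      rw [Set.uIoc_of_le (hbmono i)] at htm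
      have : |t - b i| ≤ δ := by
        rw [abs_of_nonneg (by linarith [htm.1])]
        calc t - b i ≤ b (i+1) - b i := by linarith [htm.2]
          _ = T / n := by rw [hbb, hNuTn]
          _ ≤ δ := hTn
      exact hmod (fin k) t ⟨by linarith [htm.1], by linarith [htm.2]⟩ (b i) hbimem this
    have hInt1 : ‖∫ t in A..B, (f (fin k) t - c)‖ ≤ ε * |B - A| :=
      intervalIntegral.norm_integral_le_of_norm_le_const hsb
    have hInt2 : ‖∫ t in b i..b (i+1), (f (fin k) t - c)‖ ≤ ε * |b (i+1) - b i| :=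
      intervalIntegral.norm_integral_le_of_norm_le_const hbig
    rw [hBA] at hInt1
    rw [hbb] at hInt2
    rw [abs_of_pos hu0] at hInt1
    rw [abs_of_pos (by positivity)] at hInt2
    have e1 : ∫ t in A..B, f (fin k) t
        = (∫ t in A..B, (f (fin k) t - c)) + u * c := by
      rw [intervalIntegral.integral_sub (hfint _ _ _) intervalIntegrable_const,
        intervalIntegral.integral_const, hBA, smul_eq_mul]
      ring
    have e2 : ∫ t in b i..b (i+1), f (fin k) t
        = (∫ t in b i..b (i+1), (f (fin k) t - c)) + ((N : ℝ) * u) * c := by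
      rw [intervalIntegral.integral_sub (hfint _ _ _) intervalIntegrable_const,
        intervalIntegral.integral_const, hbb, smul_eq_mul]
      ring
    rw [e1, e2]
    have hNne : (N : ℝ) ≠ 0 := ne_of_gt hNpos
    have e3 : (∫ t in A..B, (f (fin k) t - c)) + u * c
        - (1 / (N : ℝ)) * ((∫ t in b i..b (i+1), (f (fin k) t - c)) + ((N : ℝ) * u) * c)
        = (∫ t in A..B, (f (fin k) t - c))
          - (1 / (N : ℝ)) * (∫ t in b i..b (i+1), (f (fin k) t - c)) := by
      field_simp
      ring
    rw [e3]
    have h1N : 0 < 1 / (N : ℝ) := by positivity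
    calc |(∫ t in A..B, (f (fin k) t - c))
          - (1 / (N : ℝ)) * (∫ t in b i..b (i+1), (f (fin k) t - c))|
        ≤ |∫ t in A..B, (f (fin k) t - c)|
          + (1 / (N : ℝ)) * |∫ t in b i..b (i+1), (f (fin k) t - c)| := by
          have habs := abs_sub (∫ t in A..B, (f (fin k) t - c))
            ((1 / (N : ℝ)) * ∫ t in b i..b (i+1), (f (fin k) t - c))
          rwa [abs_mul, abs_of_pos h1N] at habs
      _ ≤ ε * u + (1 / (N : ℝ)) * (ε * ((N : ℝ) * u)) := by
          refine add_le_add hInt1 ?_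
          exact mul_le_mul_of_nonneg_left hInt2 (le_of_lt h1N)
      _ = 2 * ε * u := by field_simp; ring
  -- assemble
  rw [Real.dist_eq, hLHS2, hLimit, ← Finset.sum_sub_distrib]
  have hsum : |∑ i ∈ Finset.range n, (∑ k ∈ Finset.range N,
        (∫ t in a (i * N + k)..a (i * N + k + 1), f (fin k) t)
      - ∑ k ∈ Finset.range N, (1 / (N : ℝ)) * ∫ t in b i..b (i+1), f (fin k) t)|
      ≤ (n : ℝ) * ((N : ℝ) * (2 * ε * u)) := by
    calc |∑ i ∈ Finset.range n, (∑ k ∈ Finset.range N,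
          (∫ t in a (i * N + k)..a (i * N + k + 1), f (fin k) t)
        - ∑ k ∈ Finset.range N, (1 / (N : ℝ)) * ∫ t in b i..b (i+1), f (fin k) t)|
        ≤ ∑ i ∈ Finset.range n, |∑ k ∈ Finset.range N,
            (∫ t in a (i * N + k)..a (i * N + k + 1), f (fin k) t)
          - ∑ k ∈ Finset.range N, (1 / (N : ℝ)) * ∫ t in b i..b (i+1), f (fin k) t| :=
          Finset.abs_sum_le_sum_abs _ _
      _ ≤ ∑ i ∈ Finset.range n, ((N : ℝ) * (2 * ε * u)) := by
          refine Finset.sum_le_sum fun i hi => ?_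
          rw [← Finset.sum_sub_distrib]
          calc |∑ k ∈ Finset.range N,
                ((∫ t in a (i * N + k)..a (i * N + k + 1), f (fin k) t)
                  - (1 / (N : ℝ)) * ∫ t in b i..b (i+1), f (fin k) t)|
              ≤ ∑ k ∈ Finset.range N, |(∫ t in a (i * N + k)..a (i * N + k + 1), f (fin k) t)
                  - (1 / (N : ℝ)) * ∫ t in b i..b (i+1), f (fin k) t| :=
                Finset.abs_sum_le_sum_abs _ _
            _ ≤ ∑ k ∈ Finset.range N, (2 * ε * u) :=
                Finset.sum_le_sum fun k hk => hterm i hi k hk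
            _ = (N : ℝ) * (2 * ε * u) := by
                rw [Finset.sum_const, Finset.card_range, nsmul_eq_mul]
      _ = (n : ℝ) * ((N : ℝ) * (2 * ε * u)) := by
          rw [Finset.sum_const, Finset.card_range, nsmul_eq_mul]
  have hval : (n : ℝ) * ((N : ℝ) * (2 * ε * u)) = 2 * ε * T := by
    rw [hu]; field_simp
  have hfinal : 2 * ε * T < ε' := by
    have h1 : (0:ℝ) < 2 * T + 1 := by linarith
    have h2 : ε * (2 * T + 1) = ε' := by
      rw [hεdef]; field_simp
    nlinarith [hε]
  calc |∑ i ∈ Finset.range n, _| ≤ (n : ℝ) * ((N : ℝ) * (2 * ε * u)) := hsum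
    _ = 2 * ε * T := hval
    _ < ε' := hfinal
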